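/- For every real g with 0 ≤ g < 2, the 7×7 matrix H(g) has 7 distinct real eigenvalues, namely 7 + m·√(4−g²) for m ∈ {−3,−2,−1,0,1,2,3}. -/

import Mathlib

open Matrix Real

noncomputable def Htoy (g : ℝ) : Matrix (Fin 7) (Fin 7) ℝ :=
  !![1, 0, Real.sqrt 3 * g, 0, 0, 0, 0;
     0, 3, 0, Real.sqrt 2 * g, 0, 0, 0;
     -(Real.sqrt 3 * g), 0, 5, 0, 2 * g, 0, 0;
     0, -(Real.sqrt 2 * g), 0, 7, 0, Real.sqrt 2 * g, 0;
     0, 0, -(2 * g), 0, 9, 0, Real.sqrt 3 * g;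
     0, 0, 0, -(Real.sqrt 2 * g), 0, 11, 0;
     0, 0, 0, 0, -(Real.sqrt 3 * g), 0, 13]

private lemma vec7_eq {a0 a1 a2 a3 a4 a5 a6 b0 b1 b2 b3 b4 b5 b6 : ℝ}
    (h0 : a0 = b0) (h1 : a1 = b1) (h2 : a2 = b2) (h3 : a3 = b3)
    (h4 : a4 = b4) (h5 : a5 = b5) (h6 : a6 = b6) :
    ![a0, a1, a2, a3, a4, a5, a6] = ![b0, b1, b2, b3, b4, b5, b6] := by
  subst h0 h1 h2 h3 h4 h5 h6; rfl

private lemma eig_of (g μ : ℝ) (v : Fin 7 → ℝ) (hv : v ≠ 0) (h : Htoy g *ᵥ v = μ • v) :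
    Module.End.HasEigenvalue (Htoy g).mulVecLin μ := by
  apply Module.End.hasEigenvalue_of_hasEigenvector (x := v)
  exact ⟨Module.End.mem_eigenspace_iff.mpr (by simpa [Matrix.mulVecLin_apply] using h), hv⟩

theorem stmt_5 (g : ℝ) (hg0 : 0 ≤ g) (hg2 : g < 2) :
    (∀ m : ℤ, m ∈ Finset.Icc (-3 : ℤ) 3 →
      Module.End.HasEigenvalue (Htoy g).mulVecLin
        ((7 : ℝ) + (m : ℝ) * Real.sqrt (4 - g ^ 2))) ∧
    Set.InjOn (fun m : ℤ => (7 : ℝ) + (m : ℝ) * Real.sqrt (4 - g ^ 2))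
      (Set.Icc (-3 : ℤ) 3) := by
  have h4 : (0:ℝ) < 4 - g ^ 2 := by nlinarith
  set s := Real.sqrt (4 - g ^ 2) with hsdef
  have hs0 : 0 ≤ s := Real.sqrt_nonneg _
  have hs2 : s ^ 2 = 4 - g ^ 2 := Real.sq_sqrt h4.le
  have hsle : s ≤ 2 := by nlinarith [sq_nonneg g, sq_nonneg (s - 2)]
  have h3 : Real.sqrt 3 ^ 2 = 3 := Real.sq_sqrt (by norm_num)
  have h2 : Real.sqrt 2 ^ 2 = 2 := Real.sq_sqrt (by norm_num)
  have hspos : 0 < s := Real.sqrt_pos.mpr h4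
  constructor
  · intro m hm
    rw [Finset.mem_Icc] at hm
    obtain ⟨hm1, hm2⟩ := hm
    interval_cases m <;> push_cast
    · -- m = -3
      refine eig_of g _ ![(8) + (12*s) + (6*s^2) + (s^3), 0, (4*g*Real.sqrt 3) + (4*g*s*Real.sqrt 3) + (g*s^2*Real.sqrt 3), 0, (2*g^2*Real.sqrt 3) + (g^2*s*Real.sqrt 3), 0, (g^3)] ?_ ?_
      · intro hzero
        have hc : (8 + 12*s + 6*s^2 + s^3) = 0 := congrFun hzero 0
        linarith [hs0, sq_nonneg s, pow_nonneg hs0 3]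
      · simp only [Htoy, Matrix.cons_mulVec, Matrix.cons_dotProduct, Matrix.dotProduct_of_isEmpty,
          Matrix.empty_mulVec, Matrix.head_cons, Matrix.tail_cons, Matrix.smul_cons,
          Matrix.smul_empty, smul_eq_mul]
        refine vec7_eq ?_ ?_ ?_ ?_ ?_ ?_ ?_
        · linear_combination ((4*g^2) + (4*g^2*s) + (g^2*s^2)) * h3 + ((12) + (12*s) + (3*s^2)) * hs2
        · ring
        · linear_combination ((4*g*Real.sqrt 3) + (2*g*s*Real.sqrt 3)) * hs2
        · ring
        · linear_combination ((g^2*Real.sqrt 3)) * hs2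
        · ring
        · linear_combination ((-2*g^3) + (-1*g^3*s)) * h3
    · -- m = -2
      refine eig_of g _ ![0, (4) + (4*s) + (s^2), 0, (2*g*Real.sqrt 2) + (g*s*Real.sqrt 2), 0, (g^2), 0] ?_ ?_
      · intro hzero
        have hc : (4 + 4*s + s^2) = 0 := congrFun hzero 1
        nlinarith [hs0, sq_nonneg s]
      · simp only [Htoy, Matrix.cons_mulVec, Matrix.cons_dotProduct, Matrix.dotProduct_of_isEmpty,
          Matrix.empty_mulVec, Matrix.head_cons, Matrix.tail_cons, Matrix.smul_cons,
          Matrix.smul_empty, smul_eq_mul]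
        refine vec7_eq ?_ ?_ ?_ ?_ ?_ ?_ ?_
        · ring
        · linear_combination ((2*g^2) + (g^2*s)) * h2 + ((4) + (2*s)) * hs2
        · ring
        · linear_combination ((g*Real.sqrt 2)) * hs2
        · ring
        · linear_combination ((-2*g^2) + (-1*g^2*s)) * h2
        · ring
    · -- m = -1
      refine eig_of g _ ![(2*g*Real.sqrt 3) + (g*s*Real.sqrt 3), 0, (12) + (4*s) + (-1*s^2), 0, (6*g) + (g*s), 0, (g^2*Real.sqrt 3)] ?_ ?_
      · intro hzero
        have hc : (12 + 4*s + -1*s^2) = 0 := congrFun hzero 2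
        nlinarith [hs0, hsle]
      · simp only [Htoy, Matrix.cons_mulVec, Matrix.cons_dotProduct, Matrix.dotProduct_of_isEmpty,
          Matrix.empty_mulVec, Matrix.head_cons, Matrix.tail_cons, Matrix.smul_cons,
          Matrix.smul_empty, smul_eq_mul]
        refine vec7_eq ?_ ?_ ?_ ?_ ?_ ?_ ?_
        · ring
        · ring
        · linear_combination ((-2*g^2) + (-1*g^2*s)) * h3 + ((6) + (-1*s)) * hs2
        · ring
        · linear_combination ((g^3)) * h3 + ((3*g)) * hs2
        · ring
        · ring
    · -- m = 0
      refine eig_of g _ ![0, (g*Real.sqrt 2), 0, (4), 0, (g*Real.sqrt 2), 0] ?_ ?_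
      · intro hzero
        have hc : ((4:ℝ)) = 0 := congrFun hzero 3
        norm_num at hc
      · simp only [Htoy, Matrix.cons_mulVec, Matrix.cons_dotProduct, Matrix.dotProduct_of_isEmpty,
          Matrix.empty_mulVec, Matrix.head_cons, Matrix.tail_cons, Matrix.smul_cons,
          Matrix.smul_empty, smul_eq_mul]
        refine vec7_eq ?_ ?_ ?_ ?_ ?_ ?_ ?_
        · ring
        · ring
        · ring
        · ring
        · ring
        · ring
        · ring
    · -- m = 1
      refine eig_of g _ ![(g^2*Real.sqrt 3), 0, (6*g) + (g*s), 0, (12) + (4*s) + (-1*s^2), 0, (2*g*Real.sqrt 3) + (g*s*Real.sqrt 3)] ?_ ?_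
      · intro hzero
        have hc : (12 + 4*s + -1*s^2) = 0 := congrFun hzero 4
        nlinarith [hs0, hsle]
      · simp only [Htoy, Matrix.cons_mulVec, Matrix.cons_dotProduct, Matrix.dotProduct_of_isEmpty,
          Matrix.empty_mulVec, Matrix.head_cons, Matrix.tail_cons, Matrix.smul_cons,
          Matrix.smul_empty, smul_eq_mul]
        refine vec7_eq ?_ ?_ ?_ ?_ ?_ ?_ ?_
        · ring
        · ring
        · linear_combination ((-1*g^3)) * h3 + ((-3*g)) * hs2
        · ring
        · linear_combination ((2*g^2) + (g^2*s)) * h3 + ((-6) + (s)) * hs2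
        · ring
        · ring
    · -- m = 2
      refine eig_of g _ ![0, (g^2), 0, (2*g*Real.sqrt 2) + (g*s*Real.sqrt 2), 0, (4) + (4*s) + (s^2), 0] ?_ ?_
      · intro hzero
        have hc : (4 + 4*s + s^2) = 0 := congrFun hzero 5
        nlinarith [hs0, sq_nonneg s]
      · simp only [Htoy, Matrix.cons_mulVec, Matrix.cons_dotProduct, Matrix.dotProduct_of_isEmpty,
          Matrix.empty_mulVec, Matrix.head_cons, Matrix.tail_cons, Matrix.smul_cons,
          Matrix.smul_empty, smul_eq_mul]
        refine vec7_eq ?_ ?_ ?_ ?_ ?_ ?_ ?_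
        · ring
        · linear_combination ((2*g^2) + (g^2*s)) * h2
        · ring
        · linear_combination ((-1*g*Real.sqrt 2)) * hs2
        · ring
        · linear_combination ((-2*g^2) + (-1*g^2*s)) * h2 + ((-4) + (-2*s)) * hs2
        · ring
    · -- m = 3
      refine eig_of g _ ![(g^3), 0, (2*g^2*Real.sqrt 3) + (g^2*s*Real.sqrt 3), 0, (4*g*Real.sqrt 3) + (4*g*s*Real.sqrt 3) + (g*s^2*Real.sqrt 3), 0, (8) + (12*s) + (6*s^2) + (s^3)] ?_ ?_
      · intro hzero
        have hc : (8 + 12*s + 6*s^2 + s^3) = 0 := congrFun hzero 6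
        linarith [hs0, sq_nonneg s, pow_nonneg hs0 3]
      · simp only [Htoy, Matrix.cons_mulVec, Matrix.cons_dotProduct, Matrix.dotProduct_of_isEmpty,
          Matrix.empty_mulVec, Matrix.head_cons, Matrix.tail_cons, Matrix.smul_cons,
          Matrix.smul_empty, smul_eq_mul]
        refine vec7_eq ?_ ?_ ?_ ?_ ?_ ?_ ?_
        · linear_combination ((2*g^3) + (g^3*s)) * h3
        · ring
        · linear_combination ((-1*g^2*Real.sqrt 3)) * hs2
        · ring
        · linear_combination ((-4*g*Real.sqrt 3) + (-2*g*s*Real.sqrt 3)) * hs2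
        · ring
        · linear_combination ((-4*g^2) + (-4*g^2*s) + (-1*g^2*s^2)) * h3 + ((-12) + (-12*s) + (-3*s^2)) * hs2
  · intro a _ b _ hab
    simp only at hab
    have h' : (a : ℝ) * s = (b : ℝ) * s := by linarith
    have := mul_right_cancel₀ (ne_of_gt hspos) h'
    exact_mod_cast this
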